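/- Exact area under a smoothed 2D indicator of the unit disk: for every s > 0, the function (x,y) ↦ ½(1 + tanh(s(1 - x² - y²))) is integrable over ℝ², and ∫_{ℝ²} ½(1 + tanh(s(1 - x² - y²))) dx dy = π·(1 + ln(1 + e^{-2s})/(2s)). -/

import Mathlib

open Real MeasureTheory

private lemma tanh_half (u : ℝ) :
    (1 + Real.tanh u) / 2 = 1 / (1 + Real.exp (-(2 * u))) := by
  rw [Real.tanh_eq_sinh_div_cosh, Real.sinh_eq, Real.cosh_eq]
  have h1 : Real.exp u + Real.exp (-u) > 0 := by positivity
  have h2 : (1 : ℝ) + Real.exp (-(2 * u)) > 0 := by positivity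
  have h3 : Real.exp (-(2 * u)) = Real.exp (-u) * Real.exp (-u) := by
    rw [← Real.exp_add]; ring_nf
  have h4 : Real.exp u * Real.exp (-u) = 1 := by
    rw [← Real.exp_add]; simp
  have h5 : Real.exp u * Real.exp (-(2 * u)) = Real.exp (-u) := by
    rw [h3, ← mul_assoc, h4, one_mul]
  field_simp
  rw [mul_comm u 2]
  nlinarith [h3, h4, h5]

theorem integral_smoothed_disk_indicator (s : ℝ) (hs : 0 < s) :
    Integrable (fun p : ℝ × ℝ =>
        (1 + Real.tanh (s * (1 - p.1 ^ 2 - p.2 ^ 2))) / 2) volume ∧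
      (∫ p : ℝ × ℝ, (1 + Real.tanh (s * (1 - p.1 ^ 2 - p.2 ^ 2))) / 2) =
        π * (1 + Real.log (1 + Real.exp (-2 * s)) / (2 * s)) := by
  have hs' : (s : ℝ) ≠ 0 := hs.ne'
  -- rewrite the integrand
  have key : ∀ x y : ℝ, (1 + Real.tanh (s * (1 - x ^ 2 - y ^ 2))) / 2
      = 1 / (1 + Real.exp (2 * s * (x ^ 2 + y ^ 2 - 1))) := by
    intro x y
    rw [tanh_half]
    congr 2
    ring
  have key' : ∀ r : ℝ, (1 + Real.tanh (s * (1 - r ^ 2))) / 2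
      = 1 / (1 + Real.exp (2 * s * (r ^ 2 - 1))) := by
    intro r
    rw [tanh_half]
    congr 2
    ring
  -- nonnegativity and exponential bound
  have hpos : ∀ v : ℝ, (0:ℝ) < 1 + Real.exp v := fun v => by positivity
  have hb : ∀ x y : ℝ, ‖(1 + Real.tanh (s * (1 - x ^ 2 - y ^ 2))) / 2‖
      ≤ Real.exp (2 * s) * (Real.exp (-(2*s) * x ^ 2) * Real.exp (-(2*s) * y ^ 2)) := by
    intro x y
    rw [key, Real.norm_eq_abs, abs_of_nonneg (by positivity)]
    rw [← Real.exp_add, ← Real.exp_add]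
    have h1 : (0:ℝ) < 1 + Real.exp (2 * s * (x ^ 2 + y ^ 2 - 1)) := hpos _
    have h2 : Real.exp (-(2 * s * (x ^ 2 + y ^ 2 - 1)))
        = Real.exp (2 * s + (-(2 * s) * x ^ 2 + -(2 * s) * y ^ 2)) := by ring_nf
    rw [← h2]
    rw [div_le_iff₀ h1]
    have h3 : Real.exp (-(2 * s * (x ^ 2 + y ^ 2 - 1)))
        * Real.exp (2 * s * (x ^ 2 + y ^ 2 - 1)) = 1 := by
      rw [← Real.exp_add]; simp
    nlinarith [Real.exp_pos (-(2 * s * (x ^ 2 + y ^ 2 - 1))), h3]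
  -- integrability
  have hcont : Continuous (fun p : ℝ × ℝ => (1 + Real.tanh (s * (1 - p.1 ^ 2 - p.2 ^ 2))) / 2) := by
    have ht : Continuous Real.tanh := by
      have : Real.tanh = fun x => Real.sinh x / Real.cosh x := funext Real.tanh_eq_sinh_div_cosh
      rw [this]
      exact Real.continuous_sinh.div Real.continuous_cosh fun x => (Real.cosh_pos x).ne'
    exact (continuous_const.add (ht.comp (by continuity))).div_const 2
  have hgauss : Integrable (fun p : ℝ × ℝ =>
      Real.exp (2*s) * (Real.exp (-(2*s) * p.1 ^ 2) * Real.exp (-(2*s) * p.2 ^ 2))) volume := by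
    rw [Measure.volume_eq_prod]
    exact ((integrable_exp_neg_mul_sq (by positivity : (0:ℝ) < 2*s)).mul_prod
      (integrable_exp_neg_mul_sq (by positivity : (0:ℝ) < 2*s))).const_mul _
  have hint : Integrable (fun p : ℝ × ℝ =>
      (1 + Real.tanh (s * (1 - p.1 ^ 2 - p.2 ^ 2))) / 2) volume := by
    refine hgauss.mono' hcont.aestronglyMeasurable ?_
    filter_upwards with p using hb p.1 p.2
  refine ⟨hint, ?_⟩
  -- antiderivative for the radial integral
  set H : ℝ → ℝ := fun r => r ^ 2 / 2 - Real.log (1 + Real.exp (2 * s * (r ^ 2 - 1))) / (4 * s)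
    with hHdef
  have hH : ∀ r : ℝ, HasDerivAt H (r * (1 / (1 + Real.exp (2 * s * (r ^ 2 - 1))))) r := by
    intro r
    have h1 : HasDerivAt (fun r : ℝ => r ^ 2) (2 * r) r := by
      simpa using hasDerivAt_pow 2 r
    have h2 : HasDerivAt (fun r : ℝ => 2 * s * (r ^ 2 - 1)) (2 * s * (2 * r)) r :=
      (h1.sub_const 1).const_mul (2 * s)
    have h3 := h2.exp
    have h4 := (h3.const_add 1).log (hpos _).ne'
    have h6 := (h1.div_const 2).sub (h4.div_const (4 * s))
    refine h6.congr_deriv ?_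
    have hp := (hpos (2 * s * (r ^ 2 - 1))).ne'
    field_simp
    ring
  have hnonneg : ∀ r ∈ Set.Ioi (0:ℝ), 0 ≤ r * (1 / (1 + Real.exp (2 * s * (r ^ 2 - 1)))) := by
    intro r hr
    have := (hpos (2 * s * (r ^ 2 - 1)))
    have : (0:ℝ) < r := hr
    positivity
  -- rewrite H to see its limit
  have hlog : ∀ v : ℝ, Real.log (1 + Real.exp v) = v + Real.log (1 + Real.exp (-v)) := by
    intro v
    have h : (1:ℝ) + Real.exp v = Real.exp v * (1 + Real.exp (-v)) := by
      rw [mul_add, mul_one, ← Real.exp_add, add_neg_cancel, Real.exp_zero, add_comm]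
    rw [h, Real.log_mul (Real.exp_ne_zero v) (hpos _).ne', Real.log_exp]
  have hre : ∀ r : ℝ, H r = 1 / 2 - Real.log (1 + Real.exp (-(2 * s * (r ^ 2 - 1)))) / (4 * s) := by
    intro r
    rw [hHdef]
    simp only
    rw [hlog]
    field_simp
    ring
  have htend : Filter.Tendsto H Filter.atTop (nhds (1 / 2)) := by
    have t0 : Filter.Tendsto (fun r : ℝ => 2 * s * (r ^ 2 - 1)) Filter.atTop Filter.atTop := by
      apply Filter.Tendsto.const_mul_atTop (by positivity : (0:ℝ) < 2 * s)
      exact Filter.tendsto_atTop_add_const_right _ (-1)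
        (by simpa using (tendsto_pow_atTop (two_ne_zero)))
    have t1 : Filter.Tendsto (fun r : ℝ => -(2 * s * (r ^ 2 - 1))) Filter.atTop Filter.atBot :=
      Filter.tendsto_neg_atTop_atBot.comp t0
    have t2 : Filter.Tendsto (fun r : ℝ => Real.exp (-(2 * s * (r ^ 2 - 1)))) Filter.atTop
        (nhds 0) := Real.tendsto_exp_atBot.comp t1
    have t3 : Filter.Tendsto (fun r : ℝ => 1 + Real.exp (-(2 * s * (r ^ 2 - 1)))) Filter.atTop
        (nhds 1) := by simpa using t2.const_add 1
    have t4 : Filter.Tendsto (fun r : ℝ =>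
        Real.log (1 + Real.exp (-(2 * s * (r ^ 2 - 1)))) / (4 * s)) Filter.atTop (nhds 0) := by
      have := ((Real.continuousAt_log (by norm_num : (1:ℝ) ≠ 0)).tendsto.comp t3).div_const (4 * s)
      simpa using this
    have := (tendsto_const_nhds (x := (1:ℝ)/2)).sub t4
    rw [sub_zero] at this
    exact this.congr fun r => (hre r).symm
  -- the radial integral
  have hderivIci : ∀ r ∈ Set.Ici (0:ℝ),
      HasDerivAt H (r * (1 / (1 + Real.exp (2 * s * (r ^ 2 - 1))))) r := fun r _ => hH r
  have hIval : (∫ r in Set.Ioi (0:ℝ), r * (1 / (1 + Real.exp (2 * s * (r ^ 2 - 1)))))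
      = 1 / 2 - H 0 :=
    integral_Ioi_of_hasDerivAt_of_nonneg' hderivIci hnonneg htend
  have hIint : IntegrableOn (fun r : ℝ => r * (1 / (1 + Real.exp (2 * s * (r ^ 2 - 1)))))
      (Set.Ioi (0:ℝ)) :=
    integrableOn_Ioi_deriv_of_nonneg' hderivIci hnonneg htend
  have hH0 : H 0 = -(Real.log (1 + Real.exp (-2 * s)) / (4 * s)) := by
    rw [hHdef]
    norm_num
  -- polar coordinates
  rw [← integral_comp_polarCoord_symm]
  have hfun : ∀ p ∈ polarCoord.target,
      p.1 • ((1 + Real.tanh (s * (1 - (polarCoord.symm p).1 ^ 2 - (polarCoord.symm p).2 ^ 2))) / 2)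
      = (p.1 * (1 / (1 + Real.exp (2 * s * (p.1 ^ 2 - 1))))) * (fun _ : ℝ => (1:ℝ)) p.2 := by
    intro p _
    have h1 : (polarCoord.symm p).1 ^ 2 + (polarCoord.symm p).2 ^ 2 = p.1 ^ 2 := by
      simp only [polarCoord_symm_apply]
      have := Real.sin_sq_add_cos_sq p.2
      ring_nf
      nlinarith [Real.sin_sq_add_cos_sq p.2]
    have h2 : (1 - (polarCoord.symm p).1 ^ 2 - (polarCoord.symm p).2 ^ 2)
        = 1 - ((polarCoord.symm p).1 ^ 2 + (polarCoord.symm p).2 ^ 2) := by ring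
    rw [smul_eq_mul, h2, h1, key' p.1]
    ring
  rw [setIntegral_congr_fun polarCoord.open_target.measurableSet hfun]
  have htarg : polarCoord.target = Set.Ioi (0:ℝ) ×ˢ Set.Ioo (-π) π := rfl
  rw [htarg, Measure.volume_eq_prod, ← Measure.prod_restrict, integral_prod_mul (f := fun r : ℝ => r * (1 / (1 + Real.exp (2 * s * (r ^ 2 - 1))))) (g := fun _ : ℝ => (1:ℝ))]
  have hone : (∫ _ in Set.Ioo (-π) π, (1:ℝ)) = 2 * π := by
    rw [MeasureTheory.setIntegral_const, measureReal_def, Real.volume_Ioo, smul_eq_mul, mul_one,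
      ENNReal.toReal_ofReal (by linarith [Real.pi_pos])]
    ring
  rw [hIval, hH0, hone]
  field_simp
  ring
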